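/- For every r ∈ ℕ with r·k₁ ≤ t₁ and all x, y ∈ ℂ, x^r · (∂^r/∂x^r) 𝓕₂⁽¹⁾(a,b₁,b₂;c₁,c₂;t₁,t₂,k₁,k₂,x,y) = ((−1)^{r k₁} (a)_r (b₁)_r (−t₁)_{r k₁} x^r / (c₁)_r) · 𝓕₂⁽¹⁾(a + r, b₁ + r, b₂; c₁ + r, c₂; t₁ − r k₁, t₂, k₁, k₂, x, y). (This is the paper's formula θ^r 𝓕₂⁽¹⁾ = …, with the iterated operator realized as x^r (∂/∂x)^r; the derivative is the r-th partial derivative in x of the polynomial function x ↦ 𝓕₂⁽¹⁾(…,x,y).) -/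

import Mathlib

open Complex Finset

/-- Ascending Pochhammer symbol `(z)_j = z (z+1) ⋯ (z+j−1)`, with `(z)_0 = 1`. -/
noncomputable def poch (z : ℂ) (j : ℕ) : ℂ := (ascPochhammer ℂ j).eval z

/-- The first discrete Appell function `𝓕₂⁽¹⁾(a,b₁,b₂;c₁,c₂;t₁,t₂,k₁,k₂,x,y)`.
Since `(−t₁)_{m k₁} = 0` once `m k₁ > t₁` and `(−t₂)_{n k₂} = 0` once `n k₂ > t₂`
(for `k₁, k₂ ≥ 1`), the doubly infinite sum reduces to this finite sum. -/
noncomputable def F2one (a b₁ b₂ c₁ c₂ : ℂ) (t₁ t₂ k₁ k₂ : ℕ) (x y : ℂ) : ℂ :=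
  ∑ m ∈ Finset.range (t₁ + 1), ∑ n ∈ Finset.range (t₂ + 1),
    poch a (m + n) * poch b₁ m * poch b₂ n * (-1 : ℂ) ^ (m * k₁) * poch (-(t₁ : ℂ)) (m * k₁)
      * (-1 : ℂ) ^ (n * k₂) * poch (-(t₂ : ℂ)) (n * k₂) * x ^ m * y ^ n
    / (poch c₁ m * poch c₂ n * (Nat.factorial m : ℂ) * (Nat.factorial n : ℂ))

lemma poch_add (z : ℂ) (m n : ℕ) : poch z (m + n) = poch z m * poch (z + m) n := by
  unfold poch
  rw [← ascPochhammer_mul]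
  simp [Polynomial.eval_comp]

lemma poch_ne_zero {c : ℂ} (hc : ∀ n : ℕ, c ≠ -(n : ℂ)) (m : ℕ) : poch c m ≠ 0 := by
  unfold poch
  rw [Ne, ascPochhammer_eval_eq_zero_iff]
  rintro ⟨k, -, hk⟩
  exact hc k (by rw [hk]; ring)

lemma poch_neg_nat_eq_zero {t M : ℕ} (h : t < M) : poch (-(t : ℂ)) M = 0 :=
  ascPochhammer_eval_neg_coe_nat_of_lt h

lemma iteratedDeriv_polyeval (r : ℕ) (P : Polynomial ℂ) :
    iteratedDeriv r (fun s : ℂ => P.eval s) = fun x => (Polynomial.derivative^[r] P).eval x := by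
  induction r generalizing P with
  | zero => simp
  | succ r ih =>
    rw [iteratedDeriv_succ']
    have h : deriv (fun s : ℂ => P.eval s) = fun s => (Polynomial.derivative P).eval s := by
      funext s; exact Polynomial.deriv (p := P) (x := s)
    rw [h, ih]
    funext x
    rw [Function.iterate_succ_apply]

lemma iteratedDeriv_sum_monomials (N r : ℕ) (g : ℕ → ℂ) (x : ℂ) :
    iteratedDeriv r (fun s : ℂ => ∑ m ∈ Finset.range N, g m * s ^ m) x
      = ∑ m ∈ Finset.range N, g m * (m.descFactorial r : ℂ) * x ^ (m - r) := by
  have h : (fun s : ℂ => ∑ m ∈ Finset.range N, g m * s ^ m)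
      = fun s => (∑ m ∈ Finset.range N, Polynomial.C (g m) * Polynomial.X ^ m : Polynomial ℂ).eval s := by
    funext s; simp [Polynomial.eval_finset_sum]
  rw [h, iteratedDeriv_polyeval, Polynomial.iterate_derivative_sum]
  simp only [Polynomial.eval_finset_sum]
  refine Finset.sum_congr rfl fun m _ => ?_
  rw [Polynomial.iterate_derivative_C_mul, Polynomial.iterate_derivative_X_pow_eq_natCast_mul]
  simp [mul_assoc]


lemma frac_aux (B1 B2 B3 X1 X2 Y D1 D2 D3 D4 D5 D6 D7 D8 A1 A2 A3 A4 A5 E : ℂ)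
    (n1 : A1 ≠ 0) (n2 : A2 ≠ 0) (n3 : A3 ≠ 0) (n4 : A4 ≠ 0) (n5 : A5 ≠ 0) (n6 : E ≠ 0) :
    X1 * (D1 * D2 * (D3 * D4) * D5 * (B1 * B2) * (D6 * D7) * B3 * D8 * Y / (A1 * A2 * A3 * (A4 * E) * A5) * E * X2) =
    B1 * D1 * D3 * D6 * X1 / A1 * (D2 * D4 * D5 * B2 * D7 * B3 * D8 * X2 * Y / (A2 * A3 * A4 * A5)) := by
  linear_combination (X1 * (D1 * D2 * D3 * D4 * D5 * B1 * B2 * D6 * D7 * B3 * D8 * Y) * A1⁻¹ * A2⁻¹ * A3⁻¹ * A4⁻¹ * A5⁻¹ * X2) * mul_inv_cancel₀ n6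

/-- The differential formula `θ^r 𝓕₂⁽¹⁾ = (−1)^{rk₁}(a)_r(b₁)_r(−t₁)_{rk₁} x^r / (c₁)_r ·
𝓕₂⁽¹⁾(a+r, b₁+r, b₂; c₁+r, c₂; t₁−rk₁, t₂, k₁, k₂, x, y)`, with the iterated operator
realized as `x^r (∂/∂x)^r`. -/
theorem theta_pow_formula (a b₁ b₂ c₁ c₂ : ℂ) (k₁ k₂ : ℕ)
    (hk₁ : 0 < k₁) (hk₂ : 0 < k₂)
    (hc₁ : ∀ n : ℕ, c₁ ≠ -(n : ℂ)) (hc₂ : ∀ n : ℕ, c₂ ≠ -(n : ℂ))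
    (t₁ t₂ : ℕ) (r : ℕ) (hr : r * k₁ ≤ t₁) (x y : ℂ) :
    x ^ r * iteratedDeriv r (fun s : ℂ => F2one a b₁ b₂ c₁ c₂ t₁ t₂ k₁ k₂ s y) x =
      (-1 : ℂ) ^ (r * k₁) * poch a r * poch b₁ r * poch (-(t₁ : ℂ)) (r * k₁) * x ^ r /
          poch c₁ r *
        F2one (a + r) (b₁ + r) b₂ (c₁ + r) c₂ (t₁ - r * k₁) t₂ k₁ k₂ x y := by
  have hrk : r ≤ r * k₁ := Nat.le_mul_of_pos_right r hk₁
  have hrt : r ≤ t₁ := hrk.trans hr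
  set g : ℕ → ℂ := fun m => ∑ n ∈ Finset.range (t₂ + 1),
    poch a (m + n) * poch b₁ m * poch b₂ n * (-1 : ℂ) ^ (m * k₁) * poch (-(t₁ : ℂ)) (m * k₁)
      * (-1 : ℂ) ^ (n * k₂) * poch (-(t₂ : ℂ)) (n * k₂) * y ^ n
    / (poch c₁ m * poch c₂ n * (Nat.factorial m : ℂ) * (Nat.factorial n : ℂ)) with hg
  have hF : (fun s : ℂ => F2one a b₁ b₂ c₁ c₂ t₁ t₂ k₁ k₂ s y)
      = fun s => ∑ m ∈ Finset.range (t₁ + 1), g m * s ^ m := by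
    funext s
    unfold F2one
    refine Finset.sum_congr rfl fun m _ => ?_
    rw [hg]
    rw [Finset.sum_mul]
    refine Finset.sum_congr rfl fun n _ => ?_
    ring
  rw [hF, iteratedDeriv_sum_monomials]
  -- restrict the sum
  have hsub : Finset.Ico r (t₁ - r * k₁ + 1 + r) ⊆ Finset.range (t₁ + 1) := by
    intro m hm
    simp only [Finset.mem_Ico] at hm
    simp only [Finset.mem_range]
    omega
  have hzero : ∀ m ∈ Finset.range (t₁ + 1), m ∉ Finset.Ico r (t₁ - r * k₁ + 1 + r) →
      g m * (m.descFactorial r : ℂ) * x ^ (m - r) = 0 := by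
    intro m _ hm
    simp only [Finset.mem_Ico, not_and, not_lt] at hm
    rcases lt_or_ge m r with h | h
    · rw [Nat.descFactorial_eq_zero_iff_lt.mpr h]
      simp
    · have hm2 := hm h
      have hlt : t₁ < m * k₁ := by
        have h1 : m * k₁ = (m - r) * k₁ + r * k₁ := by
          rw [← Nat.add_mul]; congr 1; omega
        have h2 : m - r ≤ (m - r) * k₁ := Nat.le_mul_of_pos_right _ hk₁
        omega
      have : g m = 0 := by
        rw [hg]
        refine Finset.sum_eq_zero fun n _ => ?_
        rw [poch_neg_nat_eq_zero hlt]
        ring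
      rw [this]; ring
  rw [← Finset.sum_subset hsub hzero, Finset.sum_Ico_eq_sum_range]
  have hcount : t₁ - r * k₁ + 1 + r - r = t₁ - r * k₁ + 1 := by omega
  rw [hcount]
  -- unfold RHS
  unfold F2one
  rw [Finset.mul_sum, Finset.mul_sum]
  refine Finset.sum_congr rfl fun j hj => ?_
  simp only [Finset.mem_range] at hj
  rw [hg, Finset.sum_mul, Finset.sum_mul, Finset.mul_sum, Finset.mul_sum]
  refine Finset.sum_congr rfl fun n _ => ?_
  -- termwise identity
  have hidx : r + j - r = j := by omega
  rw [hidx]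
  have e1 : poch a (r + j + n) = poch a r * poch (a + r) (j + n) := by
    rw [show r + j + n = r + (j + n) by ring, poch_add]
  have e2 : poch b₁ (r + j) = poch b₁ r * poch (b₁ + r) j := poch_add b₁ r j
  have e3 : poch c₁ (r + j) = poch c₁ r * poch (c₁ + r) j := poch_add c₁ r j
  have e4 : poch (-(t₁ : ℂ)) ((r + j) * k₁)
      = poch (-(t₁ : ℂ)) (r * k₁) * poch (-((t₁ - r * k₁ : ℕ) : ℂ)) (j * k₁) := by
    rw [show (r + j) * k₁ = r * k₁ + j * k₁ by ring, poch_add]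
    congr 2
    push_cast [Nat.cast_sub hr]
    ring
  have e5 : ((-1 : ℂ)) ^ ((r + j) * k₁) = (-1 : ℂ) ^ (r * k₁) * (-1 : ℂ) ^ (j * k₁) := by
    rw [show (r + j) * k₁ = r * k₁ + j * k₁ by ring, pow_add]
  have e6 : ((r + j).factorial : ℂ) = (j.factorial : ℂ) * ((r + j).descFactorial r : ℂ) := by
    have h := Nat.factorial_mul_descFactorial (show r ≤ r + j from Nat.le_add_right r j)
    rw [show r + j - r = j by omega] at h
    exact_mod_cast h.symm
  rw [e1, e2, e3, e4, e5, e6]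
  have n4 : (j.factorial : ℂ) ≠ 0 := Nat.cast_ne_zero.mpr j.factorial_ne_zero
  have n1 : poch c₁ r ≠ 0 := poch_ne_zero hc₁ r
  have n2 : poch (c₁ + r) j ≠ 0 := by
    refine poch_ne_zero (fun k hk => ?_) j
    exact hc₁ (k + r) (by push_cast; linear_combination hk)
  have n3 : poch c₂ n ≠ 0 := poch_ne_zero hc₂ n
  have n5 : (n.factorial : ℂ) ≠ 0 := Nat.cast_ne_zero.mpr n.factorial_ne_zero
  have n6 : (((r + j).descFactorial r : ℕ) : ℂ) ≠ 0 := by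
    rw [Nat.cast_ne_zero]
    simp [Nat.descFactorial_eq_zero_iff_lt]
  exact frac_aux _ _ _ _ _ _ _ _ _ _ _ _ _ _ _ _ _ _ _ _ n1 n2 n3 n4 n5 n6
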